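/- The monoid M₃ = ⟨a,b | aba = b⟩ embeds into the monoid of 2×2 tropical integer matrices, via a ↦ A = [[1,-∞],[-∞,-1]] and b ↦ B = [[-∞,1],[0,-∞]]; in particular A⊗B⊗A = B. -/

import Mathlib

/-- The max-plus tropical semiring `ℤ ∪ {-∞}`: tropical addition is `max`,
tropical multiplication is `+`, and `(0 : T)` is the tropical zero `-∞`. -/
abbrev T : Type := Tropical (WithTop ℤᵒᵈ)

/-- The element of the tropical semiring corresponding to the integer `k`. -/
def t (k : ℤ) : T := Tropical.trop ((OrderDual.toDual k : ℤᵒᵈ) : WithTop ℤᵒᵈ)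

/-- The defining relation of `M₃ = ⟨a, b | aba = b⟩`, with `a` encoded as `true`
and `b` as `false`. -/
def rel3 : FreeMonoid Bool → FreeMonoid Bool → Prop :=
  fun u v => u = FreeMonoid.of true * FreeMonoid.of false * FreeMonoid.of true ∧
    v = FreeMonoid.of false

def A : Matrix (Fin 2) (Fin 2) T := !![t 1, 0; 0, t (-1)]

def B : Matrix (Fin 2) (Fin 2) T := !![0, t 1; t 0, 0]

namespace M3Aux


lemma t_mul (x y : ℤ) : t x * t y = t (x + y) := by
  unfold t; rw [← Tropical.trop_add]; rfl

lemma t_one : (1 : T) = t 0 := rfl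

lemma t_ne_zero (x : ℤ) : t x ≠ 0 := fun h =>
  WithTop.coe_ne_top (Tropical.trop_injective h)

lemma t_inj {x y : ℤ} (h : t x = t y) : x = y := by
  exact_mod_cast WithTop.coe_injective (Tropical.trop_injective h)

lemma ABA : A * B * A = B := by
  simp only [A, B, Matrix.mul_fin_two, t_mul, mul_zero, zero_mul, add_zero, zero_add,
    mul_one, one_mul]
  norm_num

def ga : PresentedMonoid rel3 := .of rel3 true
def gb : PresentedMonoid rel3 := .of rel3 false

lemma rel_key : ga * gb * ga = gb := by
  show PresentedMonoid.mk rel3 _ * PresentedMonoid.mk rel3 _ * PresentedMonoid.mk rel3 _ = _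
  rw [← map_mul, ← map_mul]
  exact Quotient.sound (ConGen.Rel.of _ _ ⟨rfl, rfl⟩)

lemma comm2 : (gb * gb) * ga = ga * (gb * gb) := by
  calc (gb * gb) * ga = (ga * gb * ga) * gb * ga := by rw [rel_key]
    _ = ga * gb * (ga * gb * ga) := by simp [mul_assoc]
    _ = ga * (gb * gb) := by rw [rel_key]; simp [mul_assoc]

lemma comm2pow (q : ℕ) : (gb * gb) * ga ^ q = ga ^ q * (gb * gb) := by
  induction q with
  | zero => simp
  | succ q ih => rw [pow_succ, ← mul_assoc, ih, mul_assoc, comm2, ← mul_assoc]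

def emk (m : ℤ) (n : ℕ) : PresentedMonoid rel3 :=
  if 0 ≤ m then ga ^ m.toNat * gb ^ n else gb * ga ^ (-m).toNat * gb ^ (n - 1)

lemma mul_ga {m : ℤ} {n : ℕ} (h : 0 ≤ m ∨ 1 ≤ n) : ga * emk m n = emk (m + 1) n := by
  rcases le_or_gt 0 m with hm | hm
  · rw [emk, if_pos hm, emk, if_pos (by omega), ← mul_assoc, ← pow_succ',
      show (m + 1).toNat = m.toNat + 1 by omega]
  · have hn : 1 ≤ n := h.resolve_left (by omega)
    have hq : (-m).toNat = (-(m + 1)).toNat + 1 := by omega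
    rw [emk, if_neg (by omega), hq, pow_succ']
    have key : ga * (gb * (ga * ga ^ (-(m+1)).toNat) * gb ^ (n - 1)) =
        gb * (ga ^ (-(m+1)).toNat * gb ^ (n - 1)) := by
      calc ga * (gb * (ga * ga ^ (-(m+1)).toNat) * gb ^ (n - 1))
          = (ga * gb * ga) * (ga ^ (-(m+1)).toNat * gb ^ (n - 1)) := by simp [mul_assoc]
        _ = gb * (ga ^ (-(m+1)).toNat * gb ^ (n - 1)) := by rw [rel_key]
    rw [key]
    rcases lt_or_ge (m + 1) 0 with hm1 | hm1
    · rw [emk, if_neg (by omega), mul_assoc]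
    · rw [show (-(m + 1)).toNat = 0 from by omega, pow_zero, one_mul, ← pow_succ',
        show n - 1 + 1 = n from by omega, emk, if_pos hm1,
        show (m + 1).toNat = 0 from by omega, pow_zero, one_mul]

lemma mul_gb {m : ℤ} {n : ℕ} (h : 0 ≤ m ∨ 1 ≤ n) : gb * emk m n = emk (-m) (n + 1) := by
  rcases lt_trichotomy m 0 with hm | hm | hm
  · have hn : 1 ≤ n := h.resolve_left (by omega)
    rw [emk, if_neg (by omega), emk, if_pos (by omega)]
    calc gb * (gb * ga ^ (-m).toNat * gb ^ (n - 1))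
        = (gb * gb) * ga ^ (-m).toNat * gb ^ (n - 1) := by simp [mul_assoc]
      _ = ga ^ (-m).toNat * ((gb * gb) * gb ^ (n - 1)) := by rw [comm2pow]; simp [mul_assoc]
      _ = ga ^ (-m).toNat * gb ^ (n + 1) := by
          rw [mul_assoc, ← pow_succ', ← pow_succ',
            show n - 1 + 1 + 1 = n + 1 from by omega]
  · subst hm; simp [emk]; rw [← pow_succ']
  · rw [emk, if_pos (by omega), emk, if_neg (by omega),
      show (-(-m)).toNat = m.toNat from by omega, show n + 1 - 1 = n from rfl, mul_assoc]

def Mat (m : ℤ) (n : ℕ) : Matrix (Fin 2) (Fin 2) T :=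
  if Even n then !![t ((n : ℤ)/2 + m), 0; 0, t ((n : ℤ)/2 - m)]
  else !![0, t ((n : ℤ)/2 + m + 1); t ((n : ℤ)/2 - m), 0]

lemma diag_eq {x y x' y' : ℤ} (h1 : x = x') (h2 : y = y') :
    (!![t x, 0; 0, t y] : Matrix (Fin 2) (Fin 2) T) = !![t x', 0; 0, t y'] := by rw [h1, h2]

lemma anti_eq {x y x' y' : ℤ} (h1 : x = x') (h2 : y = y') :
    (!![0, t x; t y, 0] : Matrix (Fin 2) (Fin 2) T) = !![0, t x'; t y', 0] := by rw [h1, h2]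

lemma A_mul_Mat (m : ℤ) (n : ℕ) : A * Mat m n = Mat (m + 1) n := by
  by_cases hn : Even n
  · rw [Mat, if_pos hn, Mat, if_pos hn]
    simp only [A, Matrix.mul_fin_two, t_mul, mul_zero, zero_mul, add_zero, zero_add]
    exact diag_eq (by ring) (by ring)
  · rw [Mat, if_neg hn, Mat, if_neg hn]
    simp only [A, Matrix.mul_fin_two, t_mul, mul_zero, zero_mul, add_zero, zero_add]
    exact anti_eq (by ring) (by ring)

lemma B_mul_Mat (m : ℤ) (n : ℕ) : B * Mat m n = Mat (-m) (n + 1) := by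
  by_cases hn : Even n
  · obtain ⟨k, hk⟩ := hn
    rw [Mat, if_pos ⟨k, hk⟩, Mat,
      if_neg (by rw [Nat.even_add_one]; exact not_not_intro ⟨k, hk⟩)]
    simp only [B, Matrix.mul_fin_two, t_mul, mul_zero, zero_mul, add_zero, zero_add]
    exact anti_eq (by omega) (by omega)
  · obtain ⟨k, hk⟩ := Nat.not_even_iff_odd.mp hn
    rw [Mat, if_neg hn, Mat, if_pos ⟨k + 1, by omega⟩]
    simp only [B, Matrix.mul_fin_two, t_mul, mul_zero, zero_mul, add_zero, zero_add]
    exact diag_eq (by omega) (by omega)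

lemma Mat_one : Mat 0 0 = 1 := by
  rw [Mat, if_pos Even.zero]
  norm_num
  rw [Matrix.one_fin_two, ← t_one]

lemma Mat_inj {m m' : ℤ} {n n' : ℕ} (h : Mat m n = Mat m' n') : m = m' ∧ n = n' := by
  by_cases hn : Even n <;> by_cases hn' : Even n'
  · obtain ⟨k, hk⟩ := hn; obtain ⟨k', hk'⟩ := hn'
    rw [Mat, if_pos ⟨k, hk⟩, Mat, if_pos ⟨k', hk'⟩] at h
    have h1 := congrFun (congrFun h 0) 0
    have h2 := congrFun (congrFun h 1) 1
    simp only [Matrix.of_apply, Matrix.cons_val', Matrix.cons_val_zero, Matrix.cons_val_one, Matrix.head_cons,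
      Matrix.empty_val', Matrix.cons_val_fin_one, Matrix.head_fin_const] at h1 h2
    have e1 := t_inj h1
    have e2 := t_inj h2
    omega
  · rw [Mat, if_pos hn, Mat, if_neg hn'] at h
    have h1 := congrFun (congrFun h 0) 0
    simp only [Matrix.of_apply, Matrix.cons_val', Matrix.cons_val_zero, Matrix.empty_val',
      Matrix.cons_val_fin_one] at h1
    exact absurd h1 (t_ne_zero _)
  · rw [Mat, if_neg hn, Mat, if_pos hn'] at h
    have h1 := congrFun (congrFun h 0) 0
    simp only [Matrix.of_apply, Matrix.cons_val', Matrix.cons_val_zero, Matrix.empty_val',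
      Matrix.cons_val_fin_one] at h1
    exact absurd h1.symm (t_ne_zero _)
  · obtain ⟨k, hk⟩ := Nat.not_even_iff_odd.mp hn
    obtain ⟨k', hk'⟩ := Nat.not_even_iff_odd.mp hn'
    rw [Mat, if_neg hn, Mat, if_neg hn'] at h
    have h1 := congrFun (congrFun h 0) 1
    have h2 := congrFun (congrFun h 1) 0
    simp only [Matrix.of_apply, Matrix.cons_val', Matrix.cons_val_zero, Matrix.cons_val_one, Matrix.head_cons,
      Matrix.empty_val', Matrix.cons_val_fin_one, Matrix.head_fin_const] at h1 h2
    have e1 := t_inj h1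
    have e2 := t_inj h2
    omega

lemma resp : ∀ a b : FreeMonoid Bool, rel3 a b →
    FreeMonoid.lift (fun c => cond c A B) a = FreeMonoid.lift (fun c => cond c A B) b := by
  rintro a b ⟨rfl, rfl⟩
  simp [ABA]

noncomputable def fhom : PresentedMonoid rel3 →* Matrix (Fin 2) (Fin 2) T :=
  PresentedMonoid.lift (fun c => cond c A B) resp

lemma fhom_ga : fhom ga = A := rfl
lemma fhom_gb : fhom gb = B := rfl

lemma decomp (x : PresentedMonoid rel3) :
    ∃ m : ℤ, ∃ n : ℕ, (0 ≤ m ∨ 1 ≤ n) ∧ x = emk m n ∧ fhom x = Mat m n := by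
  induction x with
  | _ w =>
    induction w using FreeMonoid.recOn with
    | one =>
      refine ⟨0, 0, Or.inl le_rfl, ?_, ?_⟩
      · simp [emk]
      · rw [map_one, map_one, Mat_one]
    | of_mul c w ih =>
      obtain ⟨m, n, hv, he, hf⟩ := ih
      have hmk : PresentedMonoid.mk rel3 (FreeMonoid.of c * w) =
          PresentedMonoid.of rel3 c * PresentedMonoid.mk rel3 w := map_mul _ _ _
      cases c
      · refine ⟨-m, n + 1, Or.inr (by omega), ?_, ?_⟩
        · rw [hmk, he]; exact mul_gb hv
        · rw [hmk, map_mul, he]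
          show B * fhom (emk m n) = _
          rw [← he, hf, B_mul_Mat]
      · refine ⟨m + 1, n, by omega, ?_, ?_⟩
        · rw [hmk, he]; exact mul_ga hv
        · rw [hmk, map_mul, he]
          show A * fhom (emk m n) = _
          rw [← he, hf, A_mul_Mat]

lemma fhom_inj : Function.Injective fhom := by
  intro x y hxy
  obtain ⟨m, n, _, hxe, hxf⟩ := decomp x
  obtain ⟨m', n', _, hye, hyf⟩ := decomp y
  obtain ⟨rfl, rfl⟩ := Mat_inj (hxf ▸ hyf ▸ hxy)
  rw [hxe, hye]

end M3Aux

/-- The monoid `M₃ = ⟨a, b | aba = b⟩` embeds into the monoid of `2 × 2` tropical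
matrices via `a ↦ A = [[1,-∞],[-∞,-1]]` and `b ↦ B = [[-∞,1],[0,-∞]]`;
in particular `ABA = B`. -/
theorem M3_embeds_in_M2_tropical :
    A * B * A = B ∧
      ∃ f : PresentedMonoid rel3 →* Matrix (Fin 2) (Fin 2) T,
        Function.Injective f ∧
          f (PresentedMonoid.of rel3 true) = A ∧
          f (PresentedMonoid.of rel3 false) = B := by
  exact ⟨M3Aux.ABA, M3Aux.fhom, M3Aux.fhom_inj, rfl, rfl⟩
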